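/- Catching-up step well-posedness: let C₀, C₁ be r-prox-regular closed subsets of a real Hilbert space H with e(C₀,C₁) < r, where e is the excess. Then for every y₀ ∈ C₀ there exists a unique y₁ ∈ C₁ with ‖y₁−y₀‖ = d(y₀,C₁), and moreover ‖y₁−y₀‖ ≤ e(C₀,C₁) and y₀−y₁ ∈ N_{C₁}(y₁). -/

import Mathlib

open Metric Set
open scoped RealInnerProductSpace

variable {H : Type*} [NormedAddCommGroup H] [InnerProductSpace ℝ H]

/-- The set of nearest points of `K` to `y`. -/
noncomputable def projSet (K : Set H) (y : H) : Set H :=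
  {x | x ∈ K ∧ ‖x - y‖ = Metric.infDist y K}

/-- The proximal normal cone to `K` at `x`. -/
def proxNormalCone (K : Set H) (x : H) : Set H :=
  {u | ∃ l : ℝ, 0 ≤ l ∧ ∃ y : H, x ∈ projSet K y ∧ u = l • (y - x)}

/-- `K` is `r`-prox-regular. -/
def IsProxRegular (r : ℝ) (K : Set H) : Prop :=
  ∀ y : H, 0 < Metric.infDist y K → Metric.infDist y K < r →
    (projSet K y).Nonempty ∧
      ∀ x ∈ projSet K y, x ∈ projSet K (x + (r / ‖y - x‖) • (y - x))

/-- The excess of `A` over `B`: `e(A,B) = sup_{a ∈ A} d(a,B)`. -/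
noncomputable def excess (A B : Set H) : ENNReal := ⨆ a ∈ A, EMetric.infEdist a B

/-- Key quadratic inequality from the pushed-out projection property. -/
lemma key_ineq (r d : ℝ) (hr : 0 < r) (hd : 0 < d) (x x' y₀ : H)
    (hnorm : ‖y₀ - x‖ = d)
    (h : r ≤ ‖x' - (x + (r / d) • (y₀ - x))‖) :
    ⟪x' - x, y₀ - x⟫ ≤ d / (2 * r) * ‖x' - x‖ ^ 2 := by
  set a := x' - x with ha
  set b := y₀ - x with hb
  have hx : x' - (x + (r / d) • b) = a - (r / d) • b := by
    simp [ha, hb]; abel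
  rw [hx] at h
  have hsq : r ^ 2 ≤ ‖a - (r / d) • b‖ ^ 2 := by
    have h0 : (0:ℝ) ≤ ‖a - (r / d) • b‖ := norm_nonneg _
    nlinarith
  have hexp : ‖a - (r / d) • b‖ ^ 2
      = ‖a‖ ^ 2 - 2 * ((r / d) * ⟪a, b⟫) + (r / d) ^ 2 * d ^ 2 := by
    rw [@norm_sub_sq_real, real_inner_smul_right, norm_smul, hnorm]
    have : |r / d| = r / d := abs_of_nonneg (by positivity)
    rw [Real.norm_eq_abs, this]
    ring
  rw [hexp] at hsq
  have hrd : (r / d) ^ 2 * d ^ 2 = r ^ 2 := by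
    field_simp
  rw [hrd] at hsq
  have h1 : (r / d) * ⟪a, b⟫ ≤ ‖a‖ ^ 2 / 2 := by linarith
  have h2 : ⟪a, b⟫ ≤ (d / r) * (‖a‖ ^ 2 / 2) := by
    have := mul_le_mul_of_nonneg_left h1 (le_of_lt (div_pos hd hr))
    have heq : (d / r) * ((r / d) * ⟪a, b⟫) = ⟪a, b⟫ := by
      field_simp
    linarith [heq ▸ this]
  have : (d / r) * (‖a‖ ^ 2 / 2) = d / (2 * r) * ‖a‖ ^ 2 := by ring
  linarith

theorem stmt_10 [CompleteSpace H] (r : ℝ) (hr : 0 < r) (C₀ C₁ : Set H)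
    (hC₀ : IsClosed C₀) (hC₀ne : C₀.Nonempty) (hC₀reg : IsProxRegular r C₀)
    (hC₁ : IsClosed C₁) (hC₁ne : C₁.Nonempty) (hC₁reg : IsProxRegular r C₁)
    (hexc : excess C₀ C₁ < ENNReal.ofReal r) :
    ∀ y₀ ∈ C₀, ∃ y₁ : H, projSet C₁ y₀ = {y₁} ∧
      ENNReal.ofReal ‖y₁ - y₀‖ ≤ excess C₀ C₁ ∧
      y₀ - y₁ ∈ proxNormalCone C₁ y₁ := by
  intro y₀ hy₀
  have hne : EMetric.infEdist y₀ C₁ ≠ ⊤ := Metric.infEdist_ne_top hC₁ne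
  have hle : EMetric.infEdist y₀ C₁ ≤ excess C₀ C₁ := by
    exact le_iSup₂ (f := fun a (_ : a ∈ C₀) => EMetric.infEdist a C₁) y₀ hy₀
  have hlt : EMetric.infEdist y₀ C₁ < ENNReal.ofReal r := lt_of_le_of_lt hle hexc
  have hdr : Metric.infDist y₀ C₁ < r := by
    have : (EMetric.infEdist y₀ C₁).toReal < r := ENNReal.toReal_lt_of_lt_ofReal hlt
    exact this
  have hboundaux : ENNReal.ofReal (Metric.infDist y₀ C₁) ≤ excess C₀ C₁ := by
    have : ENNReal.ofReal (Metric.infDist y₀ C₁) = EMetric.infEdist y₀ C₁ := by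
      rw [Metric.infDist]; exact ENNReal.ofReal_toReal hne
    rw [this]; exact hle
  rcases eq_or_lt_of_le (Metric.infDist_nonneg (x := y₀) (s := C₁)) with h0 | hpos
  · -- infDist = 0, so y₀ ∈ C₁
    have hy₀C₁ : y₀ ∈ C₁ := by
      rw [hC₁.mem_iff_infDist_zero hC₁ne]
      exact h0.symm
    refine ⟨y₀, ?_, ?_, ?_⟩
    · ext x
      simp only [projSet, Set.mem_setOf_eq, Set.mem_singleton_iff, ← h0]
      constructor
      · rintro ⟨-, hx⟩
        have : x - y₀ = 0 := by
          rwa [norm_eq_zero] at hx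
        exact sub_eq_zero.mp this
      · rintro rfl
        exact ⟨hy₀C₁, by simp⟩
    · simpa using (zero_le _)
    · exact ⟨0, le_refl 0, y₀, ⟨hy₀C₁, by simp [← h0]⟩, by simp⟩
  · obtain ⟨⟨x, hx⟩, hproj⟩ := hC₁reg y₀ hpos hdr
    set d := Metric.infDist y₀ C₁ with hdd
    have key : ∀ x' ∈ projSet C₁ y₀, ∀ x'' ∈ C₁,
        r ≤ ‖x'' - (x' + (r / d) • (y₀ - x'))‖ := by
      intro x' hx' x'' hx''
      have hnormx : ‖y₀ - x'‖ = d := by rw [norm_sub_rev]; exact hx'.2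
      have hmem := hproj x' hx'
      have h1 : Metric.infDist (x' + (r / ‖y₀ - x'‖) • (y₀ - x')) C₁
          = ‖x' - (x' + (r / ‖y₀ - x'‖) • (y₀ - x'))‖ := hmem.2.symm
      have h2 : ‖x' - (x' + (r / ‖y₀ - x'‖) • (y₀ - x'))‖ = r := by
        rw [hnormx]
        have : x' - (x' + (r / d) • (y₀ - x')) = -((r / d) • (y₀ - x')) := by abel
        rw [this, norm_neg, norm_smul, hnormx, Real.norm_eq_abs,
          abs_of_nonneg (le_of_lt (div_pos hr hpos))]
        field_simp
      have h3 := Metric.infDist_le_dist_of_mem (x := x' + (r / ‖y₀ - x'‖) • (y₀ - x')) hx''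
      rw [h1, h2] at h3
      rw [hnormx] at h3
      rwa [dist_eq_norm'] at h3
    have huniq : ∀ x' ∈ projSet C₁ y₀, x' = x := by
      intro x' hx'
      have hnx : ‖y₀ - x‖ = d := by rw [norm_sub_rev]; exact hx.2
      have hnx' : ‖y₀ - x'‖ = d := by rw [norm_sub_rev]; exact hx'.2
      have i1 : ⟪x' - x, y₀ - x⟫ ≤ d / (2 * r) * ‖x' - x‖ ^ 2 :=
        key_ineq r d hr hpos x x' y₀ hnx (key x hx x' hx'.1)
      have i2 : ⟪x - x', y₀ - x'⟫ ≤ d / (2 * r) * ‖x - x'‖ ^ 2 :=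
        key_ineq r d hr hpos x' x y₀ hnx' (key x' hx' x hx.1)
      have hid : ‖x' - x‖ ^ 2 = ⟪x' - x, y₀ - x⟫ + ⟪x - x', y₀ - x'⟫ := by
        have e1 : ⟪x' - x, y₀ - x⟫ + ⟪x - x', y₀ - x'⟫ = ⟪x' - x, x' - x⟫ := by
          rw [show x - x' = -(x' - x) by abel, inner_neg_left, ← sub_eq_add_neg,
            ← inner_sub_right]
          congr 1
          abel
        rw [e1, real_inner_self_eq_norm_sq]
      have hnn : ‖x - x'‖ = ‖x' - x‖ := norm_sub_rev _ _
      rw [hnn] at i2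
      have hsq0 : ‖x' - x‖ ^ 2 ≤ (d / r) * ‖x' - x‖ ^ 2 := by
        have hsum : d / (2 * r) * ‖x' - x‖ ^ 2 + d / (2 * r) * ‖x' - x‖ ^ 2
            = (d / r) * ‖x' - x‖ ^ 2 := by
          field_simp; ring
        linarith [i1, i2, hid]
      have hd1 : d / r < 1 := (div_lt_one hr).mpr hdr
      have h00 : ‖x' - x‖ ^ 2 ≤ 0 := by nlinarith [sq_nonneg (‖x' - x‖)]
      have : ‖x' - x‖ = 0 := by nlinarith [norm_nonneg (x' - x)]
      have := norm_eq_zero.mp this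
      exact sub_eq_zero.mp this
    refine ⟨x, ?_, ?_, ?_⟩
    · exact Set.eq_singleton_iff_unique_mem.mpr ⟨hx, huniq⟩
    · rw [show ‖x - y₀‖ = d from hx.2]
      exact hboundaux
    · exact ⟨1, zero_le_one, y₀, hx, by simp⟩
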